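/- Let G be a finite undirected graph in which every vertex has positive degree, with double cover H and lazy random walk matrix W on H. Let α ∈ (0,1], let s, r ∈ ℝ_{≥0}^{2n} be nonnegative vectors such that the approximate Pagerank vector apr_H(α, s, r) is entrywise nonnegative, and set p = σ∘apr_H(α, s, r). Then for every u ∈ V_G, p(u₁) ≤ α(s(u₁) + r(u₂)) + (1 − α)(pW)(u₁), and p(u₂) ≤ α(s(u₂) + r(u₁)) + (1 − α)(pW)(u₂). -/
import Mathlib


open Finset

namespace Paper

variable {V : Type*} [Fintype V] [DecidableEq V]

/-- The degree of a vertex `v` in the graph `G`. -/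
noncomputable def deg (G : SimpleGraph V) (v : V) : ℕ := {u | G.Adj v u}.ncard

/-- The volume of a set of vertices: the sum of the degrees of its members. -/
noncomputable def vol (G : SimpleGraph V) (S : Finset V) : ℕ := ∑ v ∈ S, deg G v

/-- The number of ordered pairs `(u,v)` with `u ∈ S`, `v ∈ T` and `{u,v} ∈ E(G)`.
For disjoint `S`, `T` this is the number of edges between `S` and `T`, and
`cutEdges G S Sᶜ = |∂(S)|`. -/
noncomputable def cutEdges (G : SimpleGraph V) (S T : Finset V) : ℕ :=
  {e : V × V | e.1 ∈ S ∧ e.2 ∈ T ∧ G.Adj e.1 e.2}.ncard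

/-- The conductance `Φ(S) = |∂(S)| / min(vol(S), vol(V \ S))`. -/
noncomputable def conductance (G : SimpleGraph V) (S : Finset V) : ℝ :=
  (cutEdges G S Sᶜ : ℝ) / min (vol G S : ℝ) (vol G Sᶜ : ℝ)

/-- The bipartiteness ratio `β(L,R) = 1 - 2 e(L,R) / vol(L ∪ R)`. -/
noncomputable def bipartiteness (G : SimpleGraph V) (L R : Finset V) : ℝ :=
  1 - 2 * (cutEdges G L R : ℝ) / (vol G (L ∪ R) : ℝ)

/-- The double cover of `G`: on vertex set `V ⊕ V` (with `Sum.inl v = v₁` and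
`Sum.inr v = v₂`), for every edge `{u,v}` of `G` there are edges `{u₁,v₂}` and `{u₂,v₁}`. -/
def doubleCover (G : SimpleGraph V) : SimpleGraph (V ⊕ V) :=
  SimpleGraph.fromRel (fun x y => ∃ u v, x = Sum.inl u ∧ y = Sum.inr v ∧ G.Adj u v)

open scoped Classical in
/-- One step of the lazy random walk `W = (1/2)(I + D⁻¹A)`, acting on row vectors:
`p ↦ pW`, so `(lazyWalk G p) x = (1/2) p(x) + (1/2) ∑_{y ~ x} p(y)/deg(y)`. -/
noncomputable def lazyWalk (G : SimpleGraph V) (p : V → ℝ) : V → ℝ :=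
  fun x => (1/2) * p x + (1/2) * ∑ y, (if G.Adj y x then p y / (deg G y : ℝ) else 0)

/-- The simplify operator `σ` on vectors indexed by the double cover:
`(σ∘p)(u₁) = max(0, p(u₁) - p(u₂))` and `(σ∘p)(u₂) = max(0, p(u₂) - p(u₁))`. -/
noncomputable def simplify (p : V ⊕ V → ℝ) : V ⊕ V → ℝ :=
  Sum.elim (fun u => max 0 (p (Sum.inl u) - p (Sum.inr u)))
           (fun u => max 0 (p (Sum.inr u) - p (Sum.inl u)))

/-- `q` is the personalised Pagerank vector `pr(α, s)`, i.e. it satisfies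
`q = α s + (1-α) q W`. -/
def IsPagerank (G : SimpleGraph V) (α : ℝ) (s q : V → ℝ) : Prop :=
  ∀ x, q x = α * s x + (1 - α) * lazyWalk G q x

/-- `p` is an approximate Pagerank vector `apr(α, s, r)` with residual `r`, i.e.
`p + pr(α, r) = pr(α, s)`. -/
def IsApr (G : SimpleGraph V) (α : ℝ) (s r p : V → ℝ) : Prop :=
  ∃ qs qr, IsPagerank G α s qs ∧ IsPagerank G α r qr ∧ ∀ x, p x + qr x = qs x

/-- Given an ordering `ord` of the vertices, the sweep set `S_j` consists of the
first `j` vertices in this ordering. -/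
def sweepSet {W : Type*} [Fintype W] (ord : Fin (Fintype.card W) ≃ W) (j : ℕ) :
    Finset W :=
  Finset.univ.filter fun x => (ord.symm x : ℕ) < j

/-- The size of the support `supp(p) = {u : p(u) ≠ 0}` of a vector. -/
noncomputable def suppCard {W : Type*} (p : W → ℝ) : ℕ := {x | p x ≠ 0}.ncard

/-- The Lovász–Simonovits curve of a vector `p`:
`p[x] = max { ∑_u w(u) p(u) : w ∈ [0,1]^V, ∑_u w(u) deg(u) = x }`. -/
noncomputable def lsCurve (G : SimpleGraph V) (p : V → ℝ) (x : ℝ) : ℝ :=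
  sSup {y | ∃ w : V → ℝ, (∀ u, 0 ≤ w u ∧ w u ≤ 1) ∧
    (∑ u, w u * (deg G u : ℝ)) = x ∧ y = ∑ u, w u * p u}

/-! ### Directed graphs -/

/-- Out-degree of `u` in the digraph with edge relation `E`. -/
noncomputable def degOut (E : V → V → Prop) (u : V) : ℕ := {v | E u v}.ncard

/-- In-degree of `u` in the digraph with edge relation `E`. -/
noncomputable def degIn (E : V → V → Prop) (u : V) : ℕ := {v | E v u}.ncard

/-- Out-volume `vol_out(S) = ∑_{u ∈ S} deg_out(u)`. -/
noncomputable def volOut (E : V → V → Prop) (S : Finset V) : ℕ := ∑ u ∈ S, degOut E u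

/-- In-volume `vol_in(S) = ∑_{u ∈ S} deg_in(u)`. -/
noncomputable def volIn (E : V → V → Prop) (S : Finset V) : ℕ := ∑ u ∈ S, degIn E u

/-- The number of directed edges from `L` to `R`. -/
noncomputable def eDir (E : V → V → Prop) (L R : Finset V) : ℕ :=
  {e : V × V | e.1 ∈ L ∧ e.2 ∈ R ∧ E e.1 e.2}.ncard

/-- The total number of directed edges of the digraph. -/
noncomputable def numEdges (E : V → V → Prop) : ℕ := {e : V × V | E e.1 e.2}.ncard

/-- The flow ratio `F(L,R) = 1 - 2 e(L,R) / (vol_out(L) + vol_in(R))`. -/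
noncomputable def flowRatio (E : V → V → Prop) (L R : Finset V) : ℝ :=
  1 - 2 * (eDir E L R : ℝ) / ((volOut E L : ℝ) + (volIn E R : ℝ))

/-- The semi-double cover of a digraph: on vertex set `V ⊕ V` (with `Sum.inl v = v₁`,
`Sum.inr v = v₂`), for every directed edge `(u,v)` there is an undirected edge `{u₁, v₂}`. -/
def semiDoubleCover (E : V → V → Prop) : SimpleGraph (V ⊕ V) :=
  SimpleGraph.fromRel (fun x y => ∃ u v, x = Sum.inl u ∧ y = Sum.inr v ∧ E u v)

/-! ### The evolving set process -/

/-- `χ_v W χ_S^T`: the probability that one step of the lazy random walk started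
at `v` ends in `S`. -/
noncomputable def walkToSet (H : SimpleGraph V) (S : Finset V) (v : V) : ℝ :=
  (1/2) * (if v ∈ S then (1:ℝ) else 0)
    + (1/2) * (({y | H.Adj v y ∧ y ∈ S}.ncard : ℝ) / (deg H v : ℝ))

/-- The transition kernel `K(S, S')` of the evolving set process: the probability,
over a uniformly random threshold `t ∈ [0,1]`, that `{v : χ_v W χ_S^T ≥ t} = S'`. -/
noncomputable def espKernel (H : SimpleGraph V) (S S' : Finset V) : ℝ :=
  (MeasureTheory.volume {t : ℝ | t ∈ Set.Icc (0:ℝ) 1 ∧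
    {v | t ≤ walkToSet H S v} = (S' : Set V)}).toReal

/-- The transition kernel `K̂(S,S') = (vol(S')/vol(S)) K(S,S')` of the volume-biased
evolving set process. -/
noncomputable def vbKernel (H : SimpleGraph V) (S S' : Finset V) : ℝ :=
  ((vol H S' : ℝ) / (vol H S : ℝ)) * espKernel H S S'

open scoped Classical in
/-- The probability that a sample path `(S₀, …, S_T)` of the volume-biased evolving
set process started from `S₀ = {x}` satisfies the property `P`. -/
noncomputable def pathProb (H : SimpleGraph V) (T : ℕ) (x : V)
    (P : (Fin (T+1) → Finset V) → Prop) : ℝ :=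
  ∑ f ∈ Finset.univ.filter (fun f : Fin (T+1) → Finset V => f 0 = {x} ∧ P f),
    ∏ i : Fin T, vbKernel H (f i.castSucc) (f i.succ)


section Aux
set_option linter.unusedSectionVars false

lemma dc_adj_inl_inr (G : SimpleGraph V) (a b : V) :
    (doubleCover G).Adj (Sum.inl a) (Sum.inr b) ↔ G.Adj a b := by
  simp only [doubleCover, SimpleGraph.fromRel_adj]
  constructor
  · rintro ⟨-, (⟨u, v, hu, hv, h⟩ | ⟨u, v, hu, hv, h⟩)⟩
    · simp_all
    · simp_all
  · intro h
    exact ⟨by simp, Or.inl ⟨a, b, rfl, rfl, h⟩⟩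

lemma dc_adj_inr_inl (G : SimpleGraph V) (a b : V) :
    (doubleCover G).Adj (Sum.inr a) (Sum.inl b) ↔ G.Adj a b := by
  rw [(doubleCover G).adj_comm, dc_adj_inl_inr, G.adj_comm]

lemma dc_adj_inl_inl (G : SimpleGraph V) (a b : V) :
    ¬ (doubleCover G).Adj (Sum.inl a) (Sum.inl b) := by
  simp [doubleCover, SimpleGraph.fromRel_adj]

lemma dc_adj_inr_inr (G : SimpleGraph V) (a b : V) :
    ¬ (doubleCover G).Adj (Sum.inr a) (Sum.inr b) := by
  simp [doubleCover, SimpleGraph.fromRel_adj]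

lemma deg_dc_inl (G : SimpleGraph V) (u : V) :
    deg (doubleCover G) (Sum.inl u) = deg G u := by
  unfold deg
  have h : {y | (doubleCover G).Adj (Sum.inl u) y} = Sum.inr '' {v | G.Adj u v} := by
    ext y
    cases y with
    | inl v => simp [dc_adj_inl_inl]
    | inr v => simp [dc_adj_inl_inr]
  rw [h, Set.ncard_image_of_injective _ Sum.inr_injective]

lemma deg_dc_inr (G : SimpleGraph V) (u : V) :
    deg (doubleCover G) (Sum.inr u) = deg G u := by
  unfold deg
  have h : {y | (doubleCover G).Adj (Sum.inr u) y} = Sum.inl '' {v | G.Adj u v} := by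
    ext y
    cases y with
    | inl v => simp [dc_adj_inr_inl, G.adj_comm]
    | inr v => simp [dc_adj_inr_inr]
  rw [h, Set.ncard_image_of_injective _ Sum.inl_injective]

open scoped Classical in
lemma lazyWalk_dc_inl (G : SimpleGraph V) (q : V ⊕ V → ℝ) (u : V) :
    lazyWalk (doubleCover G) q (Sum.inl u)
      = (1/2) * q (Sum.inl u)
        + (1/2) * ∑ v, (if G.Adj u v then q (Sum.inr v) / (deg G v : ℝ) else 0) := by
  unfold lazyWalk
  congr 1
  congr 1
  rw [Fintype.sum_sum_type]
  have h1 : ∀ v : V, (if (doubleCover G).Adj (Sum.inl v) (Sum.inl u)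
      then q (Sum.inl v) / (deg (doubleCover G) (Sum.inl v) : ℝ) else 0) = 0 := by
    intro v; simp [dc_adj_inl_inl]
  have h2 : ∀ v : V, (if (doubleCover G).Adj (Sum.inr v) (Sum.inl u)
      then q (Sum.inr v) / (deg (doubleCover G) (Sum.inr v) : ℝ) else 0)
      = (if G.Adj u v then q (Sum.inr v) / (deg G v : ℝ) else 0) := by
    intro v
    rw [deg_dc_inr]
    congr 1
    simp [dc_adj_inr_inl, G.adj_comm]
  simp only [h1, h2, Finset.sum_const_zero, zero_add]

open scoped Classical in
lemma lazyWalk_dc_inr (G : SimpleGraph V) (q : V ⊕ V → ℝ) (u : V) :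
    lazyWalk (doubleCover G) q (Sum.inr u)
      = (1/2) * q (Sum.inr u)
        + (1/2) * ∑ v, (if G.Adj u v then q (Sum.inl v) / (deg G v : ℝ) else 0) := by
  unfold lazyWalk
  congr 1
  congr 1
  rw [Fintype.sum_sum_type]
  have h1 : ∀ v : V, (if (doubleCover G).Adj (Sum.inr v) (Sum.inr u)
      then q (Sum.inr v) / (deg (doubleCover G) (Sum.inr v) : ℝ) else 0) = 0 := by
    intro v; simp [dc_adj_inr_inr]
  have h2 : ∀ v : V, (if (doubleCover G).Adj (Sum.inl v) (Sum.inr u)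
      then q (Sum.inl v) / (deg (doubleCover G) (Sum.inl v) : ℝ) else 0)
      = (if G.Adj u v then q (Sum.inl v) / (deg G v : ℝ) else 0) := by
    intro v
    rw [deg_dc_inl]
    congr 1
    simp [dc_adj_inl_inr, G.adj_comm]
  simp only [h1, h2, Finset.sum_const_zero, add_zero]

lemma lazyWalk_nonneg (G : SimpleGraph V) (q : V → ℝ) (hq : ∀ x, 0 ≤ q x) (x : V) :
    0 ≤ lazyWalk G q x := by
  classical
  unfold lazyWalk
  have h : 0 ≤ ∑ y, (if G.Adj y x then q y / (deg G y : ℝ) else 0) := by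
    apply Finset.sum_nonneg
    intro y _
    split_ifs
    · exact div_nonneg (hq y) (Nat.cast_nonneg _)
    · exact le_rfl
  linarith [hq x]

lemma lazyWalk_sub (G : SimpleGraph V) (a b c : V → ℝ) (h : ∀ x, c x = a x - b x) (x : V) :
    lazyWalk G c x = lazyWalk G a x - lazyWalk G b x := by
  classical
  unfold lazyWalk
  have h2 : ∀ y ∈ (Finset.univ : Finset V), (if G.Adj y x then c y / (deg G y:ℝ) else 0)
      = (if G.Adj y x then a y / (deg G y:ℝ) else 0)
        - (if G.Adj y x then b y / (deg G y:ℝ) else 0) := by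
    intro y _; rw [h y]; split_ifs <;> ring
  rw [Finset.sum_congr rfl h2, Finset.sum_sub_distrib, h x]
  ring

end Aux


/-- Let `G` have positive degrees everywhere, with double cover `H`
and lazy random walk matrix `W`. Let `α ∈ (0,1]`, let `s, r` be nonnegative with
`apr_H(α,s,r)` entrywise nonnegative, and `p = σ∘apr_H(α,s,r)`. Then for every `u`:
`p(u₁) ≤ α(s(u₁)+r(u₂)) + (1-α)(pW)(u₁)` and `p(u₂) ≤ α(s(u₂)+r(u₁)) + (1-α)(pW)(u₂)`. -/
theorem statement6 (G : SimpleGraph V) (hdeg : ∀ v, 0 < deg G v)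
    (α : ℝ) (hα0 : 0 < α) (hα1 : α ≤ 1)
    (s r p' : V ⊕ V → ℝ) (hs : ∀ x, 0 ≤ s x) (hr : ∀ x, 0 ≤ r x)
    (happr : IsApr (doubleCover G) α s r p') (hp' : ∀ x, 0 ≤ p' x) :
    ∀ u : V,
      simplify p' (Sum.inl u)
          ≤ α * (s (Sum.inl u) + r (Sum.inr u))
            + (1 - α) * lazyWalk (doubleCover G) (simplify p') (Sum.inl u) ∧
      simplify p' (Sum.inr u)
          ≤ α * (s (Sum.inr u) + r (Sum.inl u))
            + (1 - α) * lazyWalk (doubleCover G) (simplify p') (Sum.inr u) := by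
  classical
  obtain ⟨qs, qr, hqs, hqr, hsum⟩ := happr
  have hα' : 0 ≤ 1 - α := by linarith
  have hpt : ∀ x, p' x = qs x - qr x := fun x => by linarith [hsum x]
  have hpnn : ∀ x, 0 ≤ simplify p' x := by
    intro x; cases x <;> exact le_max_left _ _
  have hdiff : ∀ x, p' x = α * (s x - r x)
      + (1 - α) * lazyWalk (doubleCover G) p' x := by
    intro x
    have h1 := hqs x
    have h2 := hqr x
    rw [lazyWalk_sub (doubleCover G) qs qr p' hpt x, hpt x]
    nlinarith [h1, h2]
  have hdegpos : ∀ v : V, (0:ℝ) < (deg G v : ℝ) := fun v => by exact_mod_cast hdeg v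
  intro u
  have hL1 : lazyWalk (doubleCover G) p' (Sum.inl u) - lazyWalk (doubleCover G) p' (Sum.inr u)
      ≤ lazyWalk (doubleCover G) (simplify p') (Sum.inl u) := by
    rw [lazyWalk_dc_inl, lazyWalk_dc_inr, lazyWalk_dc_inl]
    have h1 : p' (Sum.inl u) - p' (Sum.inr u) ≤ simplify p' (Sum.inl u) := le_max_right _ _
    have h2 : ∑ v, (if G.Adj u v then p' (Sum.inr v)/(deg G v:ℝ) else 0)
        - ∑ v, (if G.Adj u v then p' (Sum.inl v)/(deg G v:ℝ) else 0)
        ≤ ∑ v, (if G.Adj u v then simplify p' (Sum.inr v)/(deg G v:ℝ) else 0) := by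
      rw [← Finset.sum_sub_distrib]
      apply Finset.sum_le_sum
      intro v _
      split_ifs with h
      · rw [div_sub_div_same]
        exact (div_le_div_iff_of_pos_right (hdegpos v)).mpr (le_max_right _ _)
      · simp
    linarith
  have hL2 : lazyWalk (doubleCover G) p' (Sum.inr u) - lazyWalk (doubleCover G) p' (Sum.inl u)
      ≤ lazyWalk (doubleCover G) (simplify p') (Sum.inr u) := by
    rw [lazyWalk_dc_inl, lazyWalk_dc_inr, lazyWalk_dc_inr]
    have h1 : p' (Sum.inr u) - p' (Sum.inl u) ≤ simplify p' (Sum.inr u) := le_max_right _ _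
    have h2 : ∑ v, (if G.Adj u v then p' (Sum.inl v)/(deg G v:ℝ) else 0)
        - ∑ v, (if G.Adj u v then p' (Sum.inr v)/(deg G v:ℝ) else 0)
        ≤ ∑ v, (if G.Adj u v then simplify p' (Sum.inl v)/(deg G v:ℝ) else 0) := by
      rw [← Finset.sum_sub_distrib]
      apply Finset.sum_le_sum
      intro v _
      split_ifs with h
      · rw [div_sub_div_same]
        exact (div_le_div_iff_of_pos_right (hdegpos v)).mpr (le_max_right _ _)
      · simp
    linarith
  constructor
  · by_cases hcase : p' (Sum.inl u) - p' (Sum.inr u) ≤ 0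
    · have hz : simplify p' (Sum.inl u) = 0 := max_eq_left hcase
      rw [hz]
      have hnn := lazyWalk_nonneg (doubleCover G) (simplify p') hpnn (Sum.inl u)
      have hsr : 0 ≤ s (Sum.inl u) + r (Sum.inr u) := add_nonneg (hs _) (hr _)
      have := mul_nonneg hα0.le hsr
      have := mul_nonneg hα' hnn
      linarith
    · push_neg at hcase
      have hval : simplify p' (Sum.inl u) = p' (Sum.inl u) - p' (Sum.inr u) :=
        max_eq_right hcase.le
      rw [hval]
      have e1 := hdiff (Sum.inl u)
      have e2 := hdiff (Sum.inr u)
      have hA : (s (Sum.inl u) - r (Sum.inl u)) - (s (Sum.inr u) - r (Sum.inr u))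
          ≤ s (Sum.inl u) + r (Sum.inr u) := by
        linarith [hs (Sum.inr u), hr (Sum.inl u)]
      nlinarith [mul_le_mul_of_nonneg_left hA hα0.le, mul_le_mul_of_nonneg_left hL1 hα']
  · by_cases hcase : p' (Sum.inr u) - p' (Sum.inl u) ≤ 0
    · have hz : simplify p' (Sum.inr u) = 0 := max_eq_left hcase
      rw [hz]
      have hnn := lazyWalk_nonneg (doubleCover G) (simplify p') hpnn (Sum.inr u)
      have hsr : 0 ≤ s (Sum.inr u) + r (Sum.inl u) := add_nonneg (hs _) (hr _)
      have := mul_nonneg hα0.le hsr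
      have := mul_nonneg hα' hnn
      linarith
    · push_neg at hcase
      have hval : simplify p' (Sum.inr u) = p' (Sum.inr u) - p' (Sum.inl u) :=
        max_eq_right hcase.le
      rw [hval]
      have e1 := hdiff (Sum.inl u)
      have e2 := hdiff (Sum.inr u)
      have hA : (s (Sum.inr u) - r (Sum.inr u)) - (s (Sum.inl u) - r (Sum.inl u))
          ≤ s (Sum.inr u) + r (Sum.inl u) := by
        linarith [hs (Sum.inl u), hr (Sum.inr u)]
      nlinarith [mul_le_mul_of_nonneg_left hA hα0.le, mul_le_mul_of_nonneg_left hL2 hα']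

end Paper
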